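/- Let p be prime and let (A,B) be a tiling pair in Z_{p^m} × Z_{p^m}. Let E be the set of generators of some cyclic subgroup of Z_{p^m} × Z_{p^m}. If ΔA ∩ E ≠ ∅, then ΔB ∩ E = ∅. -/

import Mathlib

open Complex
open scoped Classical

/-- The character value `e^{2πi t/n}` for `t : ZMod n`. -/
noncomputable def charVal (n : ℕ) (t : ZMod n) : ℂ :=
  Complex.exp (2 * Real.pi * Complex.I * (t.val : ℂ) / (n : ℂ))

/-- The symplectic form `⟨x,y⟩ = x₁y₂ - x₂y₁` on `ZMod n × ZMod n`. -/
def sympForm {n : ℕ} (x y : ZMod n × ZMod n) : ZMod n :=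
  x.1 * y.2 - x.2 * y.1

/-- Symplectic Fourier transform of the indicator of `A`. -/
noncomputable def symFT {n : ℕ} (A : Set (ZMod n × ZMod n)) (ξ : ZMod n × ZMod n) : ℂ :=
  ∑ᶠ a ∈ A, charVal n (sympForm a ξ)

/-- Euclidean Fourier transform of the indicator of `A`. -/
noncomputable def euclFT {n : ℕ} (A : Set (ZMod n × ZMod n)) (ξ : ZMod n × ZMod n) : ℂ :=
  ∑ᶠ a ∈ A, charVal n (a.1 * ξ.1 + a.2 * ξ.2)

section Aux
set_option linter.unusedSectionVars false
variable {G : Type*} [AddCommGroup G] [Fintype G] [DecidableEq G]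

/-- tiling with multiplier q -/
def TilesMul (q : ℕ) (A B : Finset G) : Prop :=
  ∀ g : G, ∃! ab : G × G, ab.1 ∈ A ∧ ab.2 ∈ B ∧ q • ab.1 + ab.2 = g

lemma tilesMul_card {q : ℕ} {A B : Finset G} (ht : TilesMul q A B) :
    A.card * B.card = Fintype.card G := by
  classical
  rw [← Finset.card_product, ← Finset.card_univ]
  apply Finset.card_bij (fun p _ => q • p.1 + p.2)
  · intro a ha; exact Finset.mem_univ _
  · intro a ha b hb hab
    simp only [Finset.mem_product] at ha hb
    exact ((ht (q • a.1 + a.2)).unique ⟨ha.1, ha.2, rfl⟩ ⟨hb.1, hb.2, hab.symm⟩)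
  · intro g _
    obtain ⟨p, ⟨h1, h2, h3⟩, -⟩ := ht g
    exact ⟨p, Finset.mem_product.2 ⟨h1, h2⟩, h3⟩

set_option linter.unusedSectionVars false

open AddMonoidAlgebra in
lemma tilesMul_prime {q : ℕ} (hq : q.Prime) {A B : Finset G} (ht : TilesMul 1 A B)
    (hdvd : ¬ q ∣ A.card) : TilesMul q A B := by
  classical
  haveI : Fact q.Prime := ⟨hq⟩
  set R := ZMod q
  let sgl : G → AddMonoidAlgebra R G := fun g => AddMonoidAlgebra.single g 1
  let fA : AddMonoidAlgebra R G := ∑ a ∈ A, sgl a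
  let fB : AddMonoidAlgebra R G := ∑ b ∈ B, sgl b
  let fG : AddMonoidAlgebra R G := ∑ g : G, sgl g
  have expand : ∀ (k : ℕ), (∑ a ∈ A, sgl (k • a)) * fB = ∑ p ∈ A ×ˢ B, sgl (k • p.1 + p.2) := by
    intro k
    rw [Finset.sum_mul, Finset.sum_product]
    refine Finset.sum_congr rfl fun a _ => ?_
    rw [Finset.mul_sum]
    refine Finset.sum_congr rfl fun b _ => ?_
    simp [sgl, AddMonoidAlgebra.single_mul_single]
  have h1 : fA * fB = fG := by
    have : fA = ∑ a ∈ A, sgl (1 • a) := by simp [fA]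
    rw [this, expand 1]
    show _ = ∑ g : G, sgl g
    apply Finset.sum_bij (fun p _ => (1:ℕ) • p.1 + p.2)
    · intro a _; exact Finset.mem_univ _
    · intro a ha b hb hab
      simp only [Finset.mem_product] at ha hb
      exact ((ht ((1:ℕ) • a.1 + a.2)).unique ⟨ha.1, ha.2, rfl⟩ ⟨hb.1, hb.2, hab.symm⟩)
    · intro g _
      obtain ⟨p, ⟨m1, m2, m3⟩, -⟩ := ht g
      exact ⟨p, Finset.mem_product.2 ⟨m1, m2⟩, m3⟩
    · intro p _; rfl
  haveI : CharP (AddMonoidAlgebra R G) q :=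
    charP_of_injective_algebraMap' R q
  have h2 : fA ^ q = ∑ a ∈ A, sgl (q • a) := by
    show (∑ a ∈ A, sgl a) ^ q = _
    rw [sum_pow_char]
    refine Finset.sum_congr rfl fun a _ => ?_
    simp [sgl, AddMonoidAlgebra.single_pow]
  have h3 : fA * fG = (A.card : R) • fG := by
    have : fA = ∑ a ∈ A, sgl (1 • a) := by simp [fA]
    calc fA * fG = ∑ a ∈ A, sgl a * fG := Finset.sum_mul _ _ _
    _ = ∑ a ∈ A, fG := by
        refine Finset.sum_congr rfl fun a _ => ?_
        show sgl a * (∑ g : G, sgl g) = ∑ g : G, sgl g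
        rw [Finset.mul_sum]
        refine Fintype.sum_bijective (fun g => a + g) (Equiv.addLeft a).bijective _ _ fun g => ?_
        simp [sgl, AddMonoidAlgebra.single_mul_single]
    _ = (A.card : R) • fG := by rw [Finset.sum_const, ← Nat.cast_smul_eq_nsmul R]
  have h4 : ∀ k : ℕ, fA ^ k * fG = ((A.card : R) ^ k) • fG := by
    intro k
    induction k with
    | zero => simp
    | succ n ih => rw [pow_succ, mul_assoc, h3, mul_smul_comm, ih, smul_smul, ← pow_succ']
  have hcard : (A.card : R) ≠ 0 := by
    rw [Ne, ZMod.natCast_eq_zero_iff]; exact hdvd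
  have h5 : (∑ p ∈ A ×ˢ B, sgl (q • p.1 + p.2)) = fG := by
    rw [← expand q, ← h2]
    have hq1 : q - 1 + 1 = q := Nat.succ_pred_eq_of_pos hq.pos
    calc fA ^ q * fB = fA ^ (q-1) * (fA * fB) := by rw [← mul_assoc, ← pow_succ, hq1]
    _ = fA ^ (q-1) * fG := by rw [h1]
    _ = ((A.card : R) ^ (q-1)) • fG := h4 _
    _ = fG := by rw [ZMod.pow_card_sub_one_eq_one hcard, one_smul]
  have happ : ∀ {ι : Type u_1} (s : Finset ι) (k : ι → G) (g : G),
      (∑ p ∈ s, sgl (k p)).coeff g = (((s.filter (fun p => k p = g)).card : ℕ) : R) := by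
    intro ι s k g
    have : (∑ p ∈ s, sgl (k p)).coeff g = ∑ p ∈ s, (sgl (k p)).coeff g := by
      rw [AddMonoidAlgebra.coeff_sum, Finsupp.finset_sum_apply]
    rw [this]
    have : ∀ p, (sgl (k p)).coeff g = if k p = g then (1:R) else 0 := fun p => Finsupp.single_apply
    simp only [this]
    rw [Finset.sum_boole]
  set N : G → ℕ := fun g => ((A ×ˢ B).filter (fun p => q • p.1 + p.2 = g)).card with hNdef
  have hNR : ∀ g : G, (N g : R) = 1 := by
    intro g
    have hL := congrArg (fun f : AddMonoidAlgebra R G => f.coeff g) h5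
    rw [happ (A ×ˢ B) (fun p : G × G => q • p.1 + p.2) g] at hL
    have hR : fG.coeff g = (1 : R) := by
      have : fG = ∑ g' ∈ Finset.univ, sgl ((fun x => x) g') := rfl
      rw [this, happ Finset.univ (fun x => x) g]
      rw [Finset.filter_eq' Finset.univ g]
      simp
    rw [hR] at hL
    exact hL
  have hN1 : ∀ g : G, 1 ≤ N g := by
    intro g
    rcases Nat.eq_zero_or_pos (N g) with h | h
    · exfalso; have := hNR g; rw [h] at this; simp at this
    · exact h
  have hsum : ∑ g : G, N g = Fintype.card G := by
    have h6 : (A ×ˢ B).card = ∑ g : G, N g :=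
      Finset.card_eq_sum_card_fiberwise (fun x _ => Finset.mem_univ _)
    rw [← h6, Finset.card_product, tilesMul_card ht]
  have hNone : ∀ g : G, N g = 1 := by
    have hle : ∀ g ∈ (Finset.univ : Finset G), 1 ≤ N g := fun g _ => hN1 g
    have hsums : ∑ g ∈ (Finset.univ : Finset G), (1:ℕ) = ∑ g ∈ (Finset.univ : Finset G), N g := by
      rw [hsum, Finset.sum_const, Finset.card_univ, smul_eq_mul, mul_one]
    intro g
    exact ((Finset.sum_eq_sum_iff_of_le hle).mp hsums g (Finset.mem_univ g)).symm
  intro g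
  obtain ⟨p, hp⟩ := Finset.card_eq_one.mp (hNone g)
  have hpmem := hp ▸ Finset.mem_singleton_self p
  have hpm := Finset.mem_filter.mp hpmem
  refine ⟨p, ⟨(Finset.mem_product.mp hpm.1).1, (Finset.mem_product.mp hpm.1).2, hpm.2⟩, ?_⟩
  intro p' hp'
  have : p' ∈ (A ×ˢ B).filter (fun p => q • p.1 + p.2 = g) :=
    Finset.mem_filter.mpr ⟨Finset.mem_product.mpr ⟨hp'.1, hp'.2.1⟩, hp'.2.2⟩
  rw [hp] at this
  exact Finset.mem_singleton.mp this

lemma tilesMul_one_of_image {s : ℕ} {A B : Finset G} (hs : TilesMul s A B) :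
    TilesMul 1 (A.image (s • ·)) B := by
  intro g
  obtain ⟨⟨a, b⟩, ⟨ha, hb, hab⟩, huniq⟩ := hs g
  refine ⟨(s • a, b), ⟨Finset.mem_image_of_mem _ ha, hb, by simpa using hab⟩, ?_⟩
  rintro ⟨c, b'⟩ ⟨hc, hb', hcb'⟩
  obtain ⟨a', ha', rfl⟩ := Finset.mem_image.mp hc
  have := huniq (a', b') ⟨ha', hb', by simpa using hcb'⟩
  have e1 : a' = a := (Prod.ext_iff.mp this).1
  have e2 : b' = b := (Prod.ext_iff.mp this).2
  simp [e1, e2]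

lemma tilesMul_coprime : ∀ (q : ℕ), 0 < q → ∀ A B : Finset G, Nat.Coprime q A.card →
    TilesMul 1 A B → TilesMul q A B := by
  intro q
  induction q using Nat.strong_induction_on with
  | _ q ih =>
    intro hq A B hco ht
    rcases eq_or_lt_of_le (Nat.one_le_iff_ne_zero.mpr hq.ne') with h1 | h2
    · intro g
      obtain ⟨p, hp, hu⟩ := ht g
      rw [← h1]
      exact ⟨p, hp, hu⟩
    · -- q ≥ 2
      set r := q.minFac with hr
      have hrprime : r.Prime := Nat.minFac_prime (by omega)
      have hrdvd : r ∣ q := Nat.minFac_dvd q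
      set s := q / r with hs
      have hq_eq : q = r * s := (Nat.mul_div_cancel' hrdvd).symm
      have hspos : 0 < s := Nat.div_pos (Nat.minFac_le (by omega)) hrprime.pos
      have hslt : s < q := by
        have : 1 < r := hrprime.one_lt
        calc s = q / r := rfl
        _ < q := Nat.div_lt_self (by omega) this
      have hscop : Nat.Coprime s A.card := Nat.Coprime.coprime_dvd_left ⟨r, by rw [hq_eq, mul_comm]⟩ hco
      have hts : TilesMul s A B := ih s hslt hspos A B hscop ht
      -- image set
      set A' := A.image (s • ·) with hA'
      have htA' : TilesMul 1 A' B := tilesMul_one_of_image hts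
      have hcardA' : A'.card = A.card := by
        have h1 := tilesMul_card hts
        have h2 := tilesMul_card htA'
        have hBpos : 0 < B.card := by
          obtain ⟨p, ⟨_, hb, _⟩, _⟩ := ht 0
          exact Finset.card_pos.mpr ⟨p.2, hb⟩
        exact Nat.eq_of_mul_eq_mul_right hBpos (h2.trans h1.symm)
      have hrA' : ¬ r ∣ A'.card := by
        rw [hcardA']
        intro hdvd
        have h1 : r ∣ 1 := Nat.coprime_iff_gcd_eq_one.mp hco ▸ Nat.dvd_gcd hrdvd hdvd
        exact hrprime.ne_one (Nat.dvd_one.mp h1)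
      have htr : TilesMul r A' B := tilesMul_prime hrprime htA' hrA'
      -- conclude
      intro g
      obtain ⟨⟨c, b⟩, ⟨hc, hb, hcb⟩, huniq⟩ := htr g
      obtain ⟨a, ha, rfl⟩ := Finset.mem_image.mp hc
      refine ⟨(a, b), ⟨ha, hb, by rw [hq_eq, mul_smul]; exact hcb⟩, ?_⟩
      rintro ⟨a', b'⟩ ⟨ha', hb', hab'⟩
      have hq' : q • a' = r • (s • a') := by rw [hq_eq, mul_smul]
      have h := huniq (s • a', b') ⟨Finset.mem_image_of_mem _ ha', hb', by rw [← hq']; exact hab'⟩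
      have hsa : s • a' = s • a := congrArg Prod.fst h
      have hbb : b' = b := congrArg Prod.snd h
      -- use uniqueness at level s
      have h2 := (hts (s • a + b)).unique (y₁ := (a', b)) (y₂ := (a, b))
        ⟨ha', hb, by show s • a' + b = s • a + b; rw [hsa]⟩ ⟨ha, hb, rfl⟩
      have haa : a' = a := congrArg Prod.fst h2
      simp [haa, hbb]

end Aux

/-- Difference set `ΔA = {a - a' : a,a' ∈ A, a ≠ a'}`. -/
def diffSet {G : Type*} [AddGroup G] (A : Set G) : Set G :=
  {d | ∃ a ∈ A, ∃ a' ∈ A, a ≠ a' ∧ d = a - a'}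

/-- `A ⊕ B = G`: every element of `G` is uniquely a sum `a + b` with `a ∈ A`, `b ∈ B`. -/
def IsTilingPair {G : Type*} [AddCommGroup G] (A B : Set G) : Prop :=
  ∀ g : G, ∃! p : G × G, p.1 ∈ A ∧ p.2 ∈ B ∧ p.1 + p.2 = g

/-- Symplectic orthogonal set `H^{⊥s}`. -/
def sympPerp {n : ℕ} (H : Set (ZMod n × ZMod n)) : Set (ZMod n × ZMod n) :=
  {g | ∀ h ∈ H, sympForm g h = 0}

/-- `(A,S)` is a symplectic spectral pair: `|A| = |S|` and `ΔS ⊆ Z(1̂_A^{sym})`. -/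
def IsSympSpectralPair {n : ℕ} (A S : Set (ZMod n × ZMod n)) : Prop :=
  Nat.card A = Nat.card S ∧ ∀ s ∈ S, ∀ s' ∈ S, s ≠ s' → symFT A (s - s') = 0

theorem diff_sets_avoid_generator_class (p m : ℕ) (hp : p.Prime) (hm : 1 ≤ m)
    (A B : Set (ZMod (p ^ m) × ZMod (p ^ m))) (htile : IsTilingPair A B)
    (x : ZMod (p ^ m) × ZMod (p ^ m))
    (E : Set (ZMod (p ^ m) × ZMod (p ^ m)))
    (hE : E = {h | AddSubgroup.zmultiples h = AddSubgroup.zmultiples x})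
    (hA : (diffSet A ∩ E).Nonempty) :
    diffSet B ∩ E = ∅ := by
  classical
  haveI : NeZero (p ^ m) := ⟨pow_ne_zero m hp.pos.ne'⟩
  by_contra hBE
  obtain ⟨e, heB, heE⟩ := Set.nonempty_iff_ne_empty.mpr hBE
  obtain ⟨d, hdA, hdE⟩ := hA
  subst hE
  obtain ⟨a, haA, a', ha'A, hane, hd⟩ := hdA
  obtain ⟨b, hbB, b', hb'B, hbne, he⟩ := heB
  have hd0 : d ≠ 0 := by rw [hd]; exact sub_ne_zero.mpr hane
  have he0 : e ≠ 0 := by rw [he]; exact sub_ne_zero.mpr hbne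
  have hde : AddSubgroup.zmultiples d = AddSubgroup.zmultiples e := by
    rw [Set.mem_setOf_eq] at hdE heE; rw [hdE, heE]
  have hmem : e ∈ AddSubgroup.zmultiples d := hde ▸ AddSubgroup.mem_zmultiples e
  obtain ⟨n, hn⟩ := AddSubgroup.mem_zmultiples_iff.mp hmem
  set t := addOrderOf d with htdef
  have ht_pos : 0 < t := addOrderOf_pos d
  have htord : addOrderOf e = t := by
    rw [← Nat.card_zmultiples e, ← hde, Nat.card_zmultiples d]
  set q0 := (n % (t : ℤ)).toNat with hq0def
  have hzt : (t : ℤ) • d = 0 := by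
    rw [natCast_zsmul]; exact addOrderOf_nsmul_eq_zero d
  have h1 : (n % (t : ℤ)) • d = e := by
    have h2 : (n % (t : ℤ)) • d = n • d - ((t:ℤ) * (n / (t:ℤ))) • d := by
      rw [Int.emod_def, sub_zsmul]; exact (sub_eq_add_neg _ _).symm
    rw [h2, mul_comm, mul_zsmul, hzt, smul_zero, sub_zero, hn]
  have hnn : 0 ≤ n % (t : ℤ) := Int.emod_nonneg n (by exact_mod_cast ht_pos.ne')
  have hq0e : q0 • d = e := by
    rw [← h1, ← Int.toNat_of_nonneg hnn, natCast_zsmul]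
  have hq0pos : 0 < q0 := by
    rcases Nat.eq_zero_or_pos q0 with h | h
    · exfalso; rw [h, zero_smul] at hq0e; exact he0 hq0e.symm
    · exact h
  have hcardG : Fintype.card (ZMod (p ^ m) × ZMod (p ^ m)) = p ^ (2 * m) := by
    rw [Fintype.card_prod, ZMod.card, ← pow_add, two_mul]
  have hq0p : ¬ p ∣ q0 := by
    intro hpq
    have htdvd : t ∣ p ^ (2 * m) := hcardG ▸ addOrderOf_dvd_card
    obtain ⟨k, hk_le, hkt⟩ := (Nat.dvd_prime_pow hp).mp htdvd
    have hk1 : 1 ≤ k := by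
      rcases Nat.eq_zero_or_pos k with h | h
      · exfalso; rw [h, pow_zero] at hkt
        exact hd0 (AddMonoid.addOrderOf_eq_one_iff.mp (htdef ▸ hkt))
      · exact h
    obtain ⟨c, hc⟩ := hpq
    have hsm : (p ^ (k - 1)) • e = 0 := by
      rw [← hq0e, ← mul_smul]
      have hmul : p ^ (k - 1) * q0 = c * p ^ k := by
        rw [hc]
        have : p ^ (k-1) * p = p ^ k := by
          rw [← pow_succ]; congr 1; omega
        calc p ^ (k-1) * (p * c) = (p ^ (k-1) * p) * c := by ring
        _ = p ^ k * c := by rw [this]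
        _ = c * p ^ k := by ring
      rw [hmul, mul_smul, ← hkt]
      rw [show t • d = 0 from addOrderOf_nsmul_eq_zero d, smul_zero]
    have hdvd2 : addOrderOf e ∣ p ^ (k - 1) := addOrderOf_dvd_of_nsmul_eq_zero hsm
    have hle : t ≤ p ^ (k - 1) := htord ▸ Nat.le_of_dvd (pow_pos hp.pos _) hdvd2
    rw [hkt] at hle
    exact absurd hle (not_le.mpr (Nat.pow_lt_pow_right hp.one_lt (by omega)))
  -- move to Finsets
  set FA := Set.Finite.toFinset (Set.toFinite A) with hFA
  set FB := Set.Finite.toFinset (Set.toFinite B) with hFB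
  have hmemA : ∀ y, y ∈ FA ↔ y ∈ A := fun y => Set.Finite.mem_toFinset _
  have hmemB : ∀ y, y ∈ FB ↔ y ∈ B := fun y => Set.Finite.mem_toFinset _
  have htF : TilesMul 1 FA FB := by
    intro g
    obtain ⟨pr, ⟨h1', h2', h3'⟩, hu⟩ := htile g
    refine ⟨pr, ⟨(hmemA _).mpr h1', (hmemB _).mpr h2', by rw [one_smul]; exact h3'⟩, ?_⟩
    rintro pr' ⟨m1, m2, m3⟩
    exact hu pr' ⟨(hmemA _).mp m1, (hmemB _).mp m2, by rw [one_smul] at m3; exact m3⟩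
  have hcardFdvd : FA.card ∣ p ^ (2 * m) := by
    refine ⟨FB.card, ?_⟩
    rw [← hcardG, ← tilesMul_card htF]
  have hcop : Nat.Coprime q0 FA.card := by
    have h1' : Nat.Coprime q0 p := Nat.coprime_comm.mp (hp.coprime_iff_not_dvd.mpr hq0p)
    exact (h1'.pow_right (2 * m)).coprime_dvd_right hcardFdvd
  have htq := tilesMul_coprime q0 hq0pos FA FB hcop htF
  -- contradiction
  have heq : q0 • a - q0 • a' = b - b' := by
    rw [← smul_sub, ← hd, hq0e, he]
  have heq2 : q0 • a + b' = b + q0 • a' := sub_eq_sub_iff_add_eq_add.mp heq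
  have key := (htq (q0 • a + b')).unique (y₁ := (a, b')) (y₂ := (a', b))
    ⟨(hmemA _).mpr haA, (hmemB _).mpr hb'B, rfl⟩
    ⟨(hmemA _).mpr ha'A, (hmemB _).mpr hbB, by
      show q0 • a' + b = q0 • a + b'
      rw [heq2, add_comm]⟩
  exact hane (Prod.ext_iff.mp key).1
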